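/- [Symmetry of the generalized chromatic quasisymmetric function] For every generalized Hessenberg function h ∈ H_{I,n} and every N ≥ 1, the polynomial csf_q^N(h) ∈ ℤ[q][x_1,…,x_N] is symmetric in the variables x_1,…,x_N: for every permutation σ of [N], applying σ to the variables leaves csf_q^N(h) unchanged. -/

import Mathlib

namespace GenHess

open scoped Classical

noncomputable section

/-- The vertex set `I ∪ {n}` of the weighted graph of a generalized Hessenberg function. -/
def verts (n : ℕ) (I : Finset ℕ) : Finset ℕ := insert n I

/-- `h : I ∪ {n} → I ∪ {n}` is a generalized Hessenberg function for `(I, n)`,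
with `I ⊆ {1, …, n-1}`, `h i ≥ i`, and `h` weakly increasing on `I ∪ {n}`. -/
def IsGenHess (n : ℕ) (I : Finset ℕ) (h : ℕ → ℕ) : Prop :=
  (∀ i ∈ I, 1 ≤ i ∧ i ≤ n - 1) ∧
  (∀ i ∈ verts n I, h i ∈ verts n I) ∧
  (∀ i ∈ verts n I, i ≤ h i) ∧
  (∀ i ∈ verts n I, ∀ j ∈ verts n I, i ≤ j → h i ≤ h j)

/-- The weight `w_h(i_k) = i_k - i_{k-1}` of a vertex: `v` minus the largest vertex
below `v` (or `0` if there is none). -/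
def wt (n : ℕ) (I : Finset ℕ) (v : ℕ) : ℕ :=
  v - ((verts n I).filter (fun u => u < v)).sup id

/-- A proper coloring of the weighted graph `(Γ_h, w_h)` with colors in `[N]`:
each vertex `v` gets a set of colors of size `w_h(v)`, and adjacent vertices get
disjoint color sets (there is an edge `{i,j}` whenever `i < j ≤ h i`). -/
def IsProper {N : ℕ} (n : ℕ) (I : Finset ℕ) (h : ℕ → ℕ)
    (γ : {x // x ∈ verts n I} → Finset (Fin N)) : Prop :=
  (∀ v : {x // x ∈ verts n I}, (γ v).card = wt n I v.val) ∧
  ∀ v u : {x // x ∈ verts n I}, v.val < u.val → u.val ≤ h v.val → Disjoint (γ v) (γ u)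

/-- The ascent statistic `asc_h(γ) = Σ_{edges i<j} #{(a,b) ∈ γ(i)×γ(j) : a < b}`. -/
def asc {N : ℕ} (n : ℕ) (I : Finset ℕ) (h : ℕ → ℕ)
    (γ : {x // x ∈ verts n I} → Finset (Fin N)) : ℕ :=
  ∑ v : {x // x ∈ verts n I}, ∑ u : {x // x ∈ verts n I},
    if v.val < u.val ∧ u.val ≤ h v.val then
      ((γ v ×ˢ γ u).filter fun ab => ab.1 < ab.2).card
    else 0

/-- The truncated chromatic quasisymmetric function `csf_q^N(h)`, as an element of
`ℤ[x_1,…,x_N][q]` (the outer `Polynomial.X` is `q`). -/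
def csf (n : ℕ) (I : Finset ℕ) (h : ℕ → ℕ) (N : ℕ) :
    Polynomial (MvPolynomial (Fin N) ℤ) :=
  ∑ γ ∈ Finset.univ.filter
      (fun γ : {x // x ∈ verts n I} → Finset (Fin N) => IsProper n I h γ),
    Polynomial.C (∏ v : {x // x ∈ verts n I}, ∏ a ∈ γ v, MvPolynomial.X a) *
      Polynomial.X ^ asc n I h γ

/-- The `q`-integer `[m]_q = 1 + q + ⋯ + q^{m-1}`. -/
def qNum (R : Type) [CommRing R] (m : ℕ) : Polynomial R :=
  ∑ i ∈ Finset.range m, Polynomial.X ^ i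

/-- The `q`-factorial `[m]_q!`. -/
def qFact (R : Type) [CommRing R] : ℕ → Polynomial R
  | 0 => 1
  | m + 1 => qNum R (m + 1) * qFact R m

/-- The elementary symmetric polynomial `e_m(x_1,…,x_N)`, viewed as a constant
polynomial in `q`. -/
def esym (N m : ℕ) : Polynomial (MvPolynomial (Fin N) ℤ) :=
  Polynomial.C (MvPolynomial.esymm (Fin N) ℤ m)

end

end GenHess

namespace CsfSym

open Finset
open scoped Classical

variable {N : ℕ}

lemma swap_lt {a b x y : Fin N} (hab : (a : ℕ) + 1 = b) (hxy : x ≠ y)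
    (h1 : ¬(x = a ∧ y = b)) (h2 : ¬(x = b ∧ y = a)) :
    (Equiv.swap a b x < Equiv.swap a b y ↔ x < y) := by
  have hne : a ≠ b := by
    intro e; rw [e] at hab; omega
  have hval : ∀ u v : Fin N, u ≠ v → (u : ℕ) ≠ (v : ℕ) := fun u v huv e => huv (Fin.ext e)
  by_cases hxa : x = a
  · have hyb : y ≠ b := fun e => h1 ⟨hxa, e⟩
    have hya : y ≠ a := fun e => hxy (by rw [hxa, e])
    rw [hxa, Equiv.swap_apply_left, Equiv.swap_apply_of_ne_of_ne hya hyb,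
      Fin.lt_def, Fin.lt_def]
    have := hval _ _ hya; have := hval _ _ hyb
    omega
  by_cases hxb : x = b
  · have hya : y ≠ a := fun e => h2 ⟨hxb, e⟩
    have hyb : y ≠ b := fun e => hxy (by rw [hxb, e])
    rw [hxb, Equiv.swap_apply_right, Equiv.swap_apply_of_ne_of_ne hya hyb,
      Fin.lt_def, Fin.lt_def]
    have := hval _ _ hya; have := hval _ _ hyb
    omega
  by_cases hya : y = a
  · rw [hya, Equiv.swap_apply_left, Equiv.swap_apply_of_ne_of_ne hxa hxb,
      Fin.lt_def, Fin.lt_def]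
    have := hval _ _ hxa; have := hval _ _ hxb
    omega
  by_cases hyb : y = b
  · rw [hyb, Equiv.swap_apply_right, Equiv.swap_apply_of_ne_of_ne hxa hxb,
      Fin.lt_def, Fin.lt_def]
    have := hval _ _ hxa; have := hval _ _ hxb
    omega
  rw [Equiv.swap_apply_of_ne_of_ne hxa hxb, Equiv.swap_apply_of_ne_of_ne hya hyb]

def cnt (A B : Finset (Fin N)) : ℕ := ((A ×ˢ B).filter fun p => p.1 < p.2).card

lemma image_swap_of_notmem {a b : Fin N} {t : Finset (Fin N)} (ha : a ∉ t) (hb : b ∉ t) :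
    t.image (Equiv.swap a b) = t := by
  ext y
  simp only [mem_image]
  constructor
  · rintro ⟨x, hx, rfl⟩
    rcases eq_or_ne x a with rfl | hxa
    · exact absurd hx ha
    rcases eq_or_ne x b with rfl | hxb
    · exact absurd hx hb
    rwa [Equiv.swap_apply_of_ne_of_ne hxa hxb]
  · intro hy
    refine ⟨y, hy, ?_⟩
    rcases eq_or_ne y a with rfl | hya
    · exact absurd hy ha
    rcases eq_or_ne y b with rfl | hyb
    · exact absurd hy hb
    exact Equiv.swap_apply_of_ne_of_ne hya hyb

lemma mem_image_swap {a b y : Fin N} {t : Finset (Fin N)} :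
    y ∈ t.image (Equiv.swap a b) ↔ Equiv.swap a b y ∈ t := by
  simp only [mem_image]
  constructor
  · rintro ⟨x, hx, rfl⟩
    rwa [Equiv.swap_apply_self]
  · intro hy
    exact ⟨_, hy, Equiv.swap_apply_self a b y⟩

lemma cnt_swap {a b : Fin N} (hab : (a : ℕ) + 1 = b) (A B : Finset (Fin N))
    (hd : Disjoint A B) :
    (cnt (A.image (Equiv.swap a b)) (B.image (Equiv.swap a b)) : ℤ)
      = cnt A B + (if b ∈ A ∧ a ∈ B then 1 else 0)
        - (if a ∈ A ∧ b ∈ B then 1 else 0) := by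
  have hab' : a < b := by rw [Fin.lt_def]; omega
  have hcard : cnt (A.image (Equiv.swap a b)) (B.image (Equiv.swap a b))
      = ((A ×ˢ B).filter fun p => Equiv.swap a b p.1 < Equiv.swap a b p.2).card := by
    apply Finset.card_bij' (fun p _ => (Equiv.swap a b p.1, Equiv.swap a b p.2))
      (fun p _ => (Equiv.swap a b p.1, Equiv.swap a b p.2))
    · rintro ⟨x, y⟩ hp
      simp only [mem_filter, mem_product, mem_image] at hp ⊢
      obtain ⟨⟨⟨x', hx', hx⟩, ⟨y', hy', hy⟩⟩, hlt⟩ := hp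
      subst hx; subst hy
      simp only [Equiv.swap_apply_self]
      exact ⟨⟨hx', hy'⟩, hlt⟩
    · rintro ⟨x, y⟩ hp
      simp only [mem_filter, mem_product, mem_image] at hp ⊢
      exact ⟨⟨⟨x, hp.1.1, rfl⟩, ⟨y, hp.1.2, rfl⟩⟩, hp.2⟩
    · rintro ⟨x, y⟩ _; simp [Equiv.swap_apply_self]
    · rintro ⟨x, y⟩ _; simp [Equiv.swap_apply_self]
  rw [hcard]
  unfold cnt
  rw [Finset.card_filter, Finset.card_filter]
  push_cast
  have hne : a ≠ b := fun e => by rw [e] at hab; omega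
  have e1 : (if b ∈ A ∧ a ∈ B then (1 : ℤ) else 0)
      = ∑ p ∈ A ×ˢ B, if p = (b, a) then (1 : ℤ) else 0 := by
    rw [Finset.sum_ite_eq' (A ×ˢ B) ((b, a) : Fin N × Fin N) (fun _ => (1 : ℤ))]
    simp only [Finset.mem_product]
  have e2 : (if a ∈ A ∧ b ∈ B then (1 : ℤ) else 0)
      = ∑ p ∈ A ×ˢ B, if p = (a, b) then (1 : ℤ) else 0 := by
    rw [Finset.sum_ite_eq' (A ×ˢ B) ((a, b) : Fin N × Fin N) (fun _ => (1 : ℤ))]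
    simp only [Finset.mem_product]
  rw [e1, e2, ← Finset.sum_add_distrib, ← Finset.sum_sub_distrib]
  apply Finset.sum_congr rfl
  rintro ⟨x, y⟩ hp
  simp only [Finset.mem_product] at hp
  have hxy : x ≠ y := by
    intro e; subst e
    exact (Finset.disjoint_left.mp hd hp.1) hp.2
  by_cases h1 : ((x, y) : Fin N × Fin N) = (a, b)
  · have hx : x = a := (Prod.ext_iff.mp h1).1
    have hy : y = b := (Prod.ext_iff.mp h1).2
    rw [hx, hy, Equiv.swap_apply_left, Equiv.swap_apply_right]
    have hne2 : ((a, b) : Fin N × Fin N) ≠ (b, a) := by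
      intro e; exact hne (Prod.ext_iff.mp e).1
    simp [hab', hab'.not_gt, hne2]
  · by_cases h2 : ((x, y) : Fin N × Fin N) = (b, a)
    · have hx : x = b := (Prod.ext_iff.mp h2).1
      have hy : y = a := (Prod.ext_iff.mp h2).2
      rw [hx, hy, Equiv.swap_apply_left, Equiv.swap_apply_right]
      have hne2 : ((b, a) : Fin N × Fin N) ≠ (a, b) := by
        intro e; exact hne (Prod.ext_iff.mp e).2
      simp [hab', hab'.not_gt, hne2]
    · have hs := swap_lt (x := x) (y := y) hab hxy
        (fun e => h1 (by rw [e.1, e.2]))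
        (fun e => h2 (by rw [e.1, e.2]))
      simp [hs, h1, h2]


noncomputable section Ctx

open GenHess

variable (n : ℕ) (I : Finset ℕ) (h : ℕ → ℕ) {N : ℕ} (a b : Fin N)

abbrev Vx := {x // x ∈ verts n I}

def Ed (v u : Vx n I) : Prop := (v : ℕ) < (u : ℕ) ∧ (u : ℕ) ≤ h (v : ℕ)

variable (γ : Vx n I → Finset (Fin N))

def Act (v : Vx n I) : Prop := (a ∈ γ v ∧ b ∉ γ v) ∨ (b ∈ γ v ∧ a ∉ γ v)

def eps (v : Vx n I) : ℤ := if a ∈ γ v then 1 else -1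

def Step (v u : Vx n I) : Prop :=
  Act n I a b γ v ∧ Act n I a b γ u ∧ (Ed n I h v u ∨ Ed n I h u v)

def Conn : Vx n I → Vx n I → Prop := Relation.ReflTransGen (Step n I h a b γ)

noncomputable def Comp (v : Vx n I) : Finset (Vx n I) :=
  Finset.univ.filter (fun u => Conn n I h a b γ v u)

lemma mem_comp_self (v : Vx n I) : v ∈ Comp n I h a b γ v := by
  simp [Comp, Conn]
  exact Finset.mem_filter.mpr ⟨Finset.mem_attach _ _, Relation.ReflTransGen.refl⟩

def cmin (v : Vx n I) : Vx n I := (Comp n I h a b γ v).min' ⟨v, mem_comp_self n I h a b γ v⟩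

def cmax (v : Vx n I) : Vx n I := (Comp n I h a b γ v).max' ⟨v, mem_comp_self n I h a b γ v⟩

def Flip (v : Vx n I) : Prop := Act n I a b γ v ∧ Odd (Comp n I h a b γ v).card

noncomputable def Phi : Vx n I → Finset (Fin N) := fun v =>
  if Flip n I h a b γ v then (γ v).image (Equiv.swap a b) else γ v

end Ctx

noncomputable section Lemmas

open GenHess

variable {n : ℕ} {I : Finset ℕ} {h : ℕ → ℕ} {N : ℕ} {a b : Fin N}
variable {γ : Vx n I → Finset (Fin N)}

lemma ed_trans_left {v w u : Vx n I} (e : Ed n I h v u) (h1 : (v : ℕ) < (w : ℕ))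
    (h2 : (w : ℕ) ≤ (u : ℕ)) : Ed n I h v w := ⟨h1, h2.trans e.2⟩

lemma ed_trans_right (hgen : IsGenHess n I h) {v w u : Vx n I} (e : Ed n I h v u)
    (h1 : (v : ℕ) ≤ (w : ℕ)) (h2 : (w : ℕ) < (u : ℕ)) : Ed n I h w u :=
  ⟨h2, e.2.trans (hgen.2.2.2 v.1 v.2 w.1 w.2 h1)⟩

lemma act_opp (hp : IsProper n I h γ) {v u : Vx n I} (e : Ed n I h v u)
    (hv : Act n I a b γ v) (hu : Act n I a b γ u) :
    (a ∈ γ v ∧ b ∈ γ u ∧ a ∉ γ u ∧ b ∉ γ v) ∨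
      (b ∈ γ v ∧ a ∈ γ u ∧ b ∉ γ u ∧ a ∉ γ v) := by
  have hd := hp.2 v u e.1 e.2
  rcases hv with ⟨ha, hb⟩ | ⟨hb, ha⟩
  · have hna : a ∉ γ u := fun hh => (Finset.disjoint_left.mp hd ha) hh
    rcases hu with ⟨ha', _⟩ | ⟨hb', _⟩
    · exact absurd ha' hna
    · exact Or.inl ⟨ha, hb', hna, hb⟩
  · have hnb : b ∉ γ u := fun hh => (Finset.disjoint_left.mp hd hb) hh
    rcases hu with ⟨ha', _⟩ | ⟨hb', _⟩
    · exact Or.inr ⟨hb, ha', hnb, ha⟩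
    · exact absurd hb' hnb

lemma eps_pm (v : Vx n I) : eps n I a γ v = 1 ∨ eps n I a γ v = -1 := by
  unfold eps; split <;> simp

lemma eps_flip (hp : IsProper n I h γ) {v u : Vx n I} (e : Ed n I h v u)
    (hv : Act n I a b γ v) (hu : Act n I a b γ u) :
    eps n I a γ u = -eps n I a γ v := by
  rcases act_opp hp e hv hu with ⟨ha, _, hna, _⟩ | ⟨_, ha', _, hna'⟩
  · simp [eps, ha, hna]
  · simp [eps, ha', hna']

lemma no_between (hp : IsProper n I h γ) (hgen : IsGenHess n I h) {v u w : Vx n I}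
    (e : Ed n I h v u) (hv : Act n I a b γ v) (hu : Act n I a b γ u)
    (hw : Act n I a b γ w) (h1 : (v : ℕ) < (w : ℕ)) (h2 : (w : ℕ) < (u : ℕ)) : False := by
  have e1 : Ed n I h v w := ed_trans_left e h1 (le_of_lt h2)
  have e2 : Ed n I h w u := ed_trans_right hgen e (le_of_lt h1) h2
  have q1 := eps_flip hp e1 hv hw
  have q2 := eps_flip hp e2 hw hu
  have q3 := eps_flip hp e hv hu
  rcases eps_pm (a := a) (γ := γ) v with hq | hq <;> omega

lemma step_symm {v u : Vx n I} (hs : Step n I h a b γ v u) : Step n I h a b γ u v :=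
  ⟨hs.2.1, hs.1, hs.2.2.symm⟩

lemma conn_symm {v u : Vx n I} (hc : Conn n I h a b γ v u) : Conn n I h a b γ u v := by
  induction hc with
  | refl => exact Relation.ReflTransGen.refl
  | tail _ hstep ih => exact Relation.ReflTransGen.head (step_symm hstep) ih

lemma mem_comp {v u : Vx n I} : u ∈ Comp n I h a b γ v ↔ Conn n I h a b γ v u := by
  simp [Comp]

lemma comp_eq_of_conn {v u : Vx n I} (hc : Conn n I h a b γ v u) :
    Comp n I h a b γ v = Comp n I h a b γ u := by
  apply Finset.ext; intro w
  rw [mem_comp, mem_comp]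
  exact ⟨fun hvw => (conn_symm hc).trans hvw, fun huw => hc.trans huw⟩

lemma act_of_conn {v u : Vx n I} (hv : Act n I a b γ v) (hc : Conn n I h a b γ v u) :
    Act n I a b γ u := by
  induction hc with
  | refl => exact hv
  | tail _ hstep _ => exact hstep.2.1

lemma claimA (hp : IsProper n I h γ) (hgen : IsGenHess n I h) {x y : Vx n I}
    (hc : Conn n I h a b γ x y) :
    ∀ w : Vx n I, Act n I a b γ w → min (x : ℕ) (y : ℕ) ≤ (w : ℕ) →
      (w : ℕ) ≤ max (x : ℕ) (y : ℕ) → Conn n I h a b γ x w := by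
  induction hc using Relation.ReflTransGen.head_induction_on with
  | refl =>
    intro w _ h1 h2
    have hw : (w : ℕ) = (y : ℕ) := by omega
    rw [show w = y from Subtype.ext hw]
    exact Relation.ReflTransGen.refl
  | @head x' z hstep hwalk ih =>
    intro w hw h1 h2
    by_cases hcase : min (z : ℕ) (y : ℕ) ≤ (w : ℕ) ∧ (w : ℕ) ≤ max (z : ℕ) (y : ℕ)
    · exact (Relation.ReflTransGen.single hstep).trans (ih w hw hcase.1 hcase.2)
    · have hx := hstep.1
      have hz := hstep.2.1
      rcases hstep.2.2 with e | e
      · have he := e.1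
        have hcases : (w : ℕ) = (x' : ℕ) ∨ (w : ℕ) = (z : ℕ) ∨
            ((x' : ℕ) < (w : ℕ) ∧ (w : ℕ) < (z : ℕ)) := by omega
        rcases hcases with hh | hh | ⟨hh1, hh2⟩
        · rw [show w = x' from Subtype.ext hh]
          exact Relation.ReflTransGen.refl
        · rw [show w = z from Subtype.ext hh]
          exact Relation.ReflTransGen.single hstep
        · exact absurd (no_between hp hgen e hx hz hw hh1 hh2) (fun f => f)
      · have he := e.1
        have hcases : (w : ℕ) = (x' : ℕ) ∨ (w : ℕ) = (z : ℕ) ∨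
            ((z : ℕ) < (w : ℕ) ∧ (w : ℕ) < (x' : ℕ)) := by omega
        rcases hcases with hh | hh | ⟨hh1, hh2⟩
        · rw [show w = x' from Subtype.ext hh]
          exact Relation.ReflTransGen.refl
        · rw [show w = z from Subtype.ext hh]
          exact Relation.ReflTransGen.single hstep
        · exact absurd (no_between hp hgen e hz hx hw hh1 hh2) (fun f => f)

lemma claimB (hp : IsProper n I h γ) (hgen : IsGenHess n I h) {x y : Vx n I}
    (hc : Conn n I h a b γ x y) :
    ∀ v u : Vx n I, Act n I a b γ v → Act n I a b γ u → (v : ℕ) < (u : ℕ) →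
      (∀ w : Vx n I, Act n I a b γ w → ¬((v : ℕ) < (w : ℕ) ∧ (w : ℕ) < (u : ℕ))) →
      (x : ℕ) ≤ (v : ℕ) → (u : ℕ) ≤ (y : ℕ) → Ed n I h v u := by
  induction hc using Relation.ReflTransGen.head_induction_on with
  | refl =>
    intro v u _ _ hvu _ hxv huy
    exfalso; omega
  | @head x' z hstep hwalk ih =>
    intro v u hv hu hvu hnb hxv huy
    by_cases hz : (z : ℕ) ≤ (v : ℕ)
    · exact ih v u hv hu hvu hnb hz huy
    · push_neg at hz
      have hx := hstep.1
      have hzact := hstep.2.1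
      rcases hstep.2.2 with e | e
      · have hvx : (v : ℕ) = (x' : ℕ) := by
          rcases lt_or_eq_of_le hxv with hlt | heq
          · exact absurd (no_between hp hgen e hx hzact hv hlt hz) (fun f => f)
          · omega
        have huz : (u : ℕ) = (z : ℕ) := by
          rcases lt_trichotomy (u : ℕ) (z : ℕ) with hlt | heq | hgt
          · exact absurd (no_between hp hgen e hx hzact hu (by omega) hlt) (fun f => f)
          · exact heq
          · exact absurd (hnb z hzact ⟨hz, hgt⟩) (fun f => f)
        rw [show v = x' from Subtype.ext hvx, show u = z from Subtype.ext huz]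
        exact e
      · exfalso
        have := e.1
        omega

lemma succ_edge (hp : IsProper n I h γ) (hgen : IsGenHess n I h) {r v u : Vx n I}
    (hr : Act n I a b γ r) (hv : v ∈ Comp n I h a b γ r) (hu : u ∈ Comp n I h a b γ r)
    (hvu : (v : ℕ) < (u : ℕ))
    (hno : ∀ w ∈ Comp n I h a b γ r, ¬((v : ℕ) < (w : ℕ) ∧ (w : ℕ) < (u : ℕ))) :
    Ed n I h v u := by
  have hcv := mem_comp.mp hv
  have hcu := mem_comp.mp hu
  have hvu' : Conn n I h a b γ v u := (conn_symm hcv).trans hcu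
  have hav : Act n I a b γ v := act_of_conn hr hcv
  have hau : Act n I a b γ u := act_of_conn hr hcu
  have hnb : ∀ w : Vx n I, Act n I a b γ w →
      ¬((v : ℕ) < (w : ℕ) ∧ (w : ℕ) < (u : ℕ)) := by
    rintro w hw ⟨h1, h2⟩
    have hcw : Conn n I h a b γ v w :=
      claimA hp hgen hvu' w hw (by omega) (by omega)
    exact hno w (mem_comp.mpr (hcv.trans hcw)) ⟨h1, h2⟩
  exact claimB hp hgen hvu' v u hav hau hvu hnb (le_refl _) (le_refl _)

lemma comp_hR (hp : IsProper n I h γ) (hgen : IsGenHess n I h) {r : Vx n I}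
    (hr : Act n I a b γ r) :
    ∀ v ∈ Comp n I h a b γ r, ∀ u ∈ Comp n I h a b γ r, v < u →
      (∀ w ∈ Comp n I h a b γ r, ¬(v < w ∧ w < u)) →
      eps n I a γ u = -eps n I a γ v := by
  intro v hv u hu hlt hno
  have e := succ_edge hp hgen hr hv hu (Subtype.coe_lt_coe.mpr hlt)
    (fun w hw hh => hno w hw ⟨Subtype.coe_lt_coe.mp hh.1, Subtype.coe_lt_coe.mp hh.2⟩)
  exact eps_flip hp e (act_of_conn hr (mem_comp.mp hv)) (act_of_conn hr (mem_comp.mp hu))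

end Lemmas

lemma alt_lemma {α : Type*} [LinearOrder α] (ε : α → ℤ) :
    ∀ (C : Finset α) (hne : C.Nonempty),
      (∀ v ∈ C, ∀ u ∈ C, v < u → (∀ w ∈ C, ¬(v < w ∧ w < u)) → ε u = -ε v) →
      ε (C.max' hne) = (-1) ^ (C.card - 1) * ε (C.min' hne) ∧
        (∑ u ∈ C, ε u) = (if Odd C.card then ε (C.min' hne) else 0) := by
  intro C
  induction C using Finset.strongInduction with
  | _ C ih =>
    intro hne hR
    by_cases h1 : C.card = 1
    · obtain ⟨v, rfl⟩ := Finset.card_eq_one.mp h1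
      simp [Finset.max'_singleton, Finset.min'_singleton]
    · have hcard2 : 2 ≤ C.card := by
        have := Finset.card_pos.mpr hne; omega
      set M := C.max' hne with hM_def
      have hM : M ∈ C := C.max'_mem hne
      set C' := C.erase M with hC'_def
      have hcardC' : C'.card = C.card - 1 := Finset.card_erase_of_mem hM
      have hC'ne : C'.Nonempty := Finset.card_pos.mp (by omega)
      have hsub : C' ⊂ C := Finset.erase_ssubset hM
      have hR' : ∀ v ∈ C', ∀ u ∈ C', v < u → (∀ w ∈ C', ¬(v < w ∧ w < u)) →
          ε u = -ε v := by
        intro v hv u hu hvu hno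
        refine hR v (Finset.mem_of_mem_erase hv) u (Finset.mem_of_mem_erase hu) hvu ?_
        rintro w hw ⟨hw1, hw2⟩
        have huM : u < M := lt_of_le_of_ne (C.le_max' u (Finset.mem_of_mem_erase hu))
          (Finset.ne_of_mem_erase hu)
        have hwC' : w ∈ C' := Finset.mem_erase.mpr ⟨ne_of_lt (hw2.trans huM), hw⟩
        exact hno w hwC' ⟨hw1, hw2⟩
      obtain ⟨ih1, ih2⟩ := ih C' hsub hC'ne hR'
      have hminC' : C'.min' hC'ne = C.min' hne := by
        apply le_antisymm
        · apply Finset.min'_le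
          apply Finset.mem_erase.mpr
          refine ⟨ne_of_lt ?_, C.min'_mem hne⟩
          exact C.min'_lt_max'_of_card (by omega)
        · exact Finset.min'_le C _ (Finset.mem_of_mem_erase (C'.min'_mem hC'ne))
      set p := C'.max' hC'ne with hp_def
      have hpC' : p ∈ C' := C'.max'_mem hC'ne
      have hpC : p ∈ C := Finset.mem_of_mem_erase hpC'
      have hpM : p < M := lt_of_le_of_ne (C.le_max' p hpC) (Finset.ne_of_mem_erase hpC')
      have hstep : ε M = -ε p := by
        refine hR p hpC M hM hpM ?_
        rintro w hw ⟨hw1, hw2⟩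
        have hwC' : w ∈ C' := Finset.mem_erase.mpr ⟨ne_of_lt hw2, hw⟩
        exact absurd (C'.le_max' w hwC') (not_le.mpr hw1)
      obtain ⟨k, hk⟩ : ∃ k, C'.card = k + 1 :=
        ⟨C'.card - 1, by have := Finset.card_pos.mpr hC'ne; omega⟩
      have hsum : ∑ u ∈ C, ε u = (∑ u ∈ C', ε u) + ε M := by
        rw [Finset.sum_erase_add C ε hM]
      have hcardC : C.card = k + 2 := by omega
      have e1 : k + 1 - 1 = k := by omega
      have e2 : k + 2 - 1 = k + 1 := by omega
      constructor
      · rw [hstep, ih1, hminC', hk, hcardC, e1, e2, pow_succ]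
        ring
      · rw [hsum, ih2, hstep, ih1, hminC', hk, hcardC, e1]
        rcases Nat.even_or_odd k with hk2 | hk2
        · have ho1 : Odd (k + 1) := Even.add_one hk2
          have ho2 : ¬ Odd (k + 2) := by
            rw [Nat.odd_iff]; rw [Nat.even_iff] at hk2; omega
          rw [if_pos ho1, if_neg ho2, hk2.neg_one_pow]
          ring
        · have ho1 : ¬ Odd (k + 1) := by
            rw [Nat.odd_iff] at hk2 ⊢; omega
          have ho2 : Odd (k + 2) := by
            rw [Nat.odd_iff] at hk2 ⊢; omega
          rw [if_neg ho1, if_pos ho2, hk2.neg_one_pow]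
          ring

noncomputable section Lemmas2

open GenHess

variable {n : ℕ} {I : Finset ℕ} {h : ℕ → ℕ} {N : ℕ} {a b : Fin N}
variable {γ : Vx n I → Finset (Fin N)}

lemma comp_ne (v : Vx n I) : (Comp n I h a b γ v).Nonempty := ⟨v, mem_comp_self n I h a b γ v⟩

lemma min'_eq_of_eq {α : Type*} [LinearOrder α] {s t : Finset α} (hst : s = t)
    (hs : s.Nonempty) : s.min' hs = t.min' (hst ▸ hs) := by subst hst; rfl

lemma max'_eq_of_eq {α : Type*} [LinearOrder α] {s t : Finset α} (hst : s = t)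
    (hs : s.Nonempty) : s.max' hs = t.max' (hst ▸ hs) := by subst hst; rfl

lemma cmin_eq_of_comp {x y : Vx n I} (hc : Comp n I h a b γ x = Comp n I h a b γ y) :
    cmin n I h a b γ x = cmin n I h a b γ y := by
  unfold cmin; exact min'_eq_of_eq hc _

lemma cmax_eq_of_comp {x y : Vx n I} (hc : Comp n I h a b γ x = Comp n I h a b γ y) :
    cmax n I h a b γ x = cmax n I h a b γ y := by
  unfold cmax; exact max'_eq_of_eq hc _

lemma inact_aux {s t : Finset (Fin N)} (hd : Disjoint s t) (hAs : a ∈ s ∨ b ∈ s)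
    (hAt : ¬((a ∈ t ∧ b ∉ t) ∨ (b ∈ t ∧ a ∉ t))) : a ∉ t ∧ b ∉ t := by
  push_neg at hAt
  constructor
  · intro ha
    have hb : b ∈ t := hAt.1 ha
    rcases hAs with hs | hs
    · exact (Finset.disjoint_left.mp hd hs) ha
    · exact (Finset.disjoint_left.mp hd hs) hb
  · intro hb
    have ha : a ∈ t := hAt.2 hb
    rcases hAs with hs | hs
    · exact (Finset.disjoint_left.mp hd hs) ha
    · exact (Finset.disjoint_left.mp hd hs) hb

lemma act_mem (hAv : Act n I a b γ v) : a ∈ γ v ∨ b ∈ γ v := by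
  rcases hAv with ⟨ha, _⟩ | ⟨hb, _⟩
  · exact Or.inl ha
  · exact Or.inr hb

lemma not_act_of_edge_flip {v u : Vx n I} (hFv : Flip n I h a b γ v)
    (hFu : ¬ Flip n I h a b γ u) (e : Ed n I h v u ∨ Ed n I h u v) :
    ¬ Act n I a b γ u := by
  intro hAu
  apply hFu
  refine ⟨hAu, ?_⟩
  have hconn : Conn n I h a b γ v u := Relation.ReflTransGen.single ⟨hFv.1, hAu, e⟩
  rw [← comp_eq_of_conn hconn]
  exact hFv.2

lemma act_phi (v : Vx n I) :
    Act n I a b (Phi n I h a b γ) v ↔ Act n I a b γ v := by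
  unfold Phi
  by_cases hF : Flip n I h a b γ v
  · simp only [if_pos hF, Act, mem_image_swap, Equiv.swap_apply_left,
      Equiv.swap_apply_right]
    exact or_comm
  · simp only [if_neg hF, Act]

lemma step_phi (v u : Vx n I) :
    Step n I h a b (Phi n I h a b γ) v u ↔ Step n I h a b γ v u := by
  unfold Step
  rw [act_phi, act_phi]

lemma conn_phi (v u : Vx n I) :
    Conn n I h a b (Phi n I h a b γ) v u ↔ Conn n I h a b γ v u := by
  constructor
  · exact fun hc => Relation.ReflTransGen.mono (fun x y hs => (step_phi x y).mp hs) v u hc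
  · exact fun hc => Relation.ReflTransGen.mono (fun x y hs => (step_phi x y).mpr hs) v u hc

lemma comp_phi (v : Vx n I) :
    Comp n I h a b (Phi n I h a b γ) v = Comp n I h a b γ v := by
  apply Finset.ext; intro u
  rw [mem_comp, mem_comp, conn_phi]

lemma flip_phi (v : Vx n I) :
    Flip n I h a b (Phi n I h a b γ) v ↔ Flip n I h a b γ v := by
  unfold Flip
  rw [act_phi, comp_phi]

lemma phi_invol : Phi n I h a b (Phi n I h a b γ) = γ := by
  funext v
  show (if Flip n I h a b (Phi n I h a b γ) v then
      (Phi n I h a b γ v).image (Equiv.swap a b) else Phi n I h a b γ v) = γ v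
  by_cases hF : Flip n I h a b γ v
  · rw [if_pos ((flip_phi v).mpr hF)]
    show ((if Flip n I h a b γ v then (γ v).image (Equiv.swap a b) else γ v).image
      (Equiv.swap a b)) = γ v
    rw [if_pos hF, Finset.image_image,
      show (⇑(Equiv.swap a b) ∘ ⇑(Equiv.swap a b)) = id from
        funext fun x => Equiv.swap_apply_self a b x]
    exact Finset.image_id
  · rw [if_neg (fun hh => hF ((flip_phi v).mp hh))]
    show (if Flip n I h a b γ v then (γ v).image (Equiv.swap a b) else γ v) = γ v
    rw [if_neg hF]

lemma phi_proper (hp : IsProper n I h γ) : IsProper n I h (Phi n I h a b γ) := by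
  constructor
  · intro v
    show (if Flip n I h a b γ v then (γ v).image (Equiv.swap a b) else γ v).card = _
    split
    · rw [Finset.card_image_of_injective _ (Equiv.injective _)]
      exact hp.1 v
    · exact hp.1 v
  · intro v u hvu hle
    have e : Ed n I h v u := ⟨hvu, hle⟩
    have hd := hp.2 v u hvu hle
    show Disjoint (if Flip n I h a b γ v then (γ v).image (Equiv.swap a b) else γ v)
      (if Flip n I h a b γ u then (γ u).image (Equiv.swap a b) else γ u)
    by_cases hFv : Flip n I h a b γ v <;> by_cases hFu : Flip n I h a b γ u
    · rw [if_pos hFv, if_pos hFu, Finset.disjoint_left]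
      intro x hx1 hx2
      rw [mem_image_swap] at hx1 hx2
      exact (Finset.disjoint_left.mp hd hx1) hx2
    · have hAu := not_act_of_edge_flip hFv hFu (Or.inl e)
      obtain ⟨hna, hnb⟩ := inact_aux hd (act_mem hFv.1) hAu
      rw [if_pos hFv, if_neg hFu, Finset.disjoint_left]
      intro x hx1 hx2
      rw [mem_image_swap] at hx1
      rcases eq_or_ne x a with rfl | hxa
      · exact hna hx2
      rcases eq_or_ne x b with rfl | hxb
      · exact hnb hx2
      rw [Equiv.swap_apply_of_ne_of_ne hxa hxb] at hx1
      exact (Finset.disjoint_left.mp hd hx1) hx2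
    · have hAv := not_act_of_edge_flip hFu hFv (Or.inr e)
      obtain ⟨hna, hnb⟩ := inact_aux hd.symm (act_mem hFu.1) hAv
      rw [if_neg hFv, if_pos hFu, Finset.disjoint_left]
      intro x hx1 hx2
      rw [mem_image_swap] at hx2
      rcases eq_or_ne x a with rfl | hxa
      · exact hna hx1
      rcases eq_or_ne x b with rfl | hxb
      · exact hnb hx1
      rw [Equiv.swap_apply_of_ne_of_ne hxa hxb] at hx2
      exact (Finset.disjoint_left.mp hd hx1) hx2
    · rw [if_neg hFv, if_neg hFu]
      exact hd

lemma indeg_card (hp : IsProper n I h γ) (hgen : IsGenHess n I h) {u : Vx n I}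
    (hFu : Flip n I h a b γ u) :
    ((Finset.univ.filter (Flip n I h a b γ)).filter (fun v => Ed n I h v u)).card
      = if u = cmin n I h a b γ u then 0 else 1 := by
  by_cases h0 : u = cmin n I h a b γ u
  · rw [if_pos h0]
    rw [Finset.card_eq_zero, Finset.eq_empty_iff_forall_notMem]
    intro v hv
    rw [Finset.mem_filter, Finset.mem_filter] at hv
    obtain ⟨⟨_, hFv⟩, e⟩ := hv
    have hstep : Step n I h a b γ v u := ⟨hFv.1, hFu.1, Or.inl e⟩
    have hvC : v ∈ Comp n I h a b γ u :=
      mem_comp.mpr (Relation.ReflTransGen.single (step_symm hstep))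
    have hle : cmin n I h a b γ u ≤ v := Finset.min'_le _ v hvC
    rw [← h0] at hle
    have := Subtype.coe_le_coe.mpr hle
    have := e.1
    omega
  · rw [if_neg h0]
    have hminle : cmin n I h a b γ u ≤ u :=
      Finset.min'_le _ u (mem_comp_self n I h a b γ u)
    have hminlt : cmin n I h a b γ u < u :=
      lt_of_le_of_ne hminle (fun e => h0 e.symm)
    set Dset := (Comp n I h a b γ u).filter (fun w : Vx n I => (w : ℕ) < (u : ℕ)) with hD
    have hDne : Dset.Nonempty := by
      refine ⟨cmin n I h a b γ u, Finset.mem_filter.mpr ⟨?_, ?_⟩⟩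
      · exact Finset.min'_mem _ _
      · exact Subtype.coe_lt_coe.mpr hminlt
    set p := Dset.max' hDne with hpdef
    have hpD := Dset.max'_mem hDne
    rw [Finset.mem_filter] at hpD
    have hno : ∀ w ∈ Comp n I h a b γ u, ¬((p : ℕ) < (w : ℕ) ∧ (w : ℕ) < (u : ℕ)) := by
      rintro w hw ⟨h1, h2⟩
      have hwD : w ∈ Dset := Finset.mem_filter.mpr ⟨hw, h2⟩
      have hcc := Subtype.coe_le_coe.mpr (Dset.le_max' w hwD)
      rw [← hpdef] at hcc
      omega
    have e : Ed n I h p u :=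
      succ_edge hp hgen hFu.1 hpD.1 (mem_comp_self n I h a b γ u) hpD.2 hno
    have hAp : Act n I a b γ p := act_of_conn hFu.1 (mem_comp.mp hpD.1)
    have hFp : Flip n I h a b γ p := by
      refine ⟨hAp, ?_⟩
      rw [← comp_eq_of_conn (mem_comp.mp hpD.1)]
      exact hFu.2
    have hsingle : (Finset.univ.filter (Flip n I h a b γ)).filter (fun v => Ed n I h v u)
        = {p} := by
      apply Finset.eq_singleton_iff_unique_mem.mpr
      constructor
      · exact Finset.mem_filter.mpr ⟨Finset.mem_filter.mpr ⟨Finset.mem_univ _, hFp⟩, e⟩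
      · intro v hv
        rw [Finset.mem_filter, Finset.mem_filter] at hv
        obtain ⟨⟨_, hFv⟩, ev⟩ := hv
        have hstep : Step n I h a b γ v u := ⟨hFv.1, hFu.1, Or.inl ev⟩
        have hvC : v ∈ Comp n I h a b γ u :=
          mem_comp.mpr (Relation.ReflTransGen.single (step_symm hstep))
        have hvD : v ∈ Dset := Finset.mem_filter.mpr ⟨hvC, ev.1⟩
        have hvp : v ≤ p := Dset.le_max' v hvD
        rcases lt_or_eq_of_le hvp with hlt | heq
        · exact absurd (no_between hp hgen ev hFv.1 hFu.1 hAp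
            (Subtype.coe_lt_coe.mpr hlt) hpD.2) (fun f => f)
        · exact heq
    rw [hsingle, Finset.card_singleton]

lemma outdeg_card (hp : IsProper n I h γ) (hgen : IsGenHess n I h) {u : Vx n I}
    (hFu : Flip n I h a b γ u) :
    ((Finset.univ.filter (Flip n I h a b γ)).filter (fun w => Ed n I h u w)).card
      = if u = cmax n I h a b γ u then 0 else 1 := by
  by_cases h0 : u = cmax n I h a b γ u
  · rw [if_pos h0]
    rw [Finset.card_eq_zero, Finset.eq_empty_iff_forall_notMem]
    intro v hv
    rw [Finset.mem_filter, Finset.mem_filter] at hv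
    obtain ⟨⟨_, hFv⟩, e⟩ := hv
    have hstep : Step n I h a b γ u v := ⟨hFu.1, hFv.1, Or.inl e⟩
    have hvC : v ∈ Comp n I h a b γ u :=
      mem_comp.mpr (Relation.ReflTransGen.single hstep)
    have hle : v ≤ cmax n I h a b γ u := Finset.le_max' _ v hvC
    rw [← h0] at hle
    have := Subtype.coe_le_coe.mpr hle
    have := e.1
    omega
  · rw [if_neg h0]
    have hmaxle : u ≤ cmax n I h a b γ u :=
      Finset.le_max' _ u (mem_comp_self n I h a b γ u)
    have hmaxlt : u < cmax n I h a b γ u := lt_of_le_of_ne hmaxle h0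
    set Dset := (Comp n I h a b γ u).filter (fun w : Vx n I => (u : ℕ) < (w : ℕ)) with hD
    have hDne : Dset.Nonempty := by
      refine ⟨cmax n I h a b γ u, Finset.mem_filter.mpr ⟨?_, ?_⟩⟩
      · exact Finset.max'_mem _ _
      · exact Subtype.coe_lt_coe.mpr hmaxlt
    set q := Dset.min' hDne with hqdef
    have hqD := Dset.min'_mem hDne
    rw [Finset.mem_filter] at hqD
    have hno : ∀ w ∈ Comp n I h a b γ u, ¬((u : ℕ) < (w : ℕ) ∧ (w : ℕ) < (q : ℕ)) := by
      rintro w hw ⟨h1, h2⟩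
      have hwD : w ∈ Dset := Finset.mem_filter.mpr ⟨hw, h1⟩
      have hcc := Subtype.coe_le_coe.mpr (Dset.min'_le w hwD)
      rw [← hqdef] at hcc
      omega
    have e : Ed n I h u q :=
      succ_edge hp hgen hFu.1 (mem_comp_self n I h a b γ u) hqD.1 hqD.2 hno
    have hAq : Act n I a b γ q := act_of_conn hFu.1 (mem_comp.mp hqD.1)
    have hFq : Flip n I h a b γ q := by
      refine ⟨hAq, ?_⟩
      rw [← comp_eq_of_conn (mem_comp.mp hqD.1)]
      exact hFu.2
    have hsingle : (Finset.univ.filter (Flip n I h a b γ)).filter (fun w => Ed n I h u w)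
        = {q} := by
      apply Finset.eq_singleton_iff_unique_mem.mpr
      constructor
      · exact Finset.mem_filter.mpr ⟨Finset.mem_filter.mpr ⟨Finset.mem_univ _, hFq⟩, e⟩
      · intro v hv
        rw [Finset.mem_filter, Finset.mem_filter] at hv
        obtain ⟨⟨_, hFv⟩, ev⟩ := hv
        have hstep : Step n I h a b γ u v := ⟨hFu.1, hFv.1, Or.inl ev⟩
        have hvC : v ∈ Comp n I h a b γ u :=
          mem_comp.mpr (Relation.ReflTransGen.single hstep)
        have hvD : v ∈ Dset := Finset.mem_filter.mpr ⟨hvC, ev.1⟩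
        have hqv : q ≤ v := Dset.min'_le v hvD
        rcases lt_or_eq_of_le hqv with hlt | heq
        · exact absurd (no_between hp hgen ev hFu.1 hFv.1 hAq hqD.2
            (Subtype.coe_lt_coe.mpr hlt)) (fun f => f)
        · exact heq.symm
    rw [hsingle, Finset.card_singleton]

lemma eps_minmax (hp : IsProper n I h γ) (hgen : IsGenHess n I h) {u : Vx n I}
    (hAu : Act n I a b γ u) (hodd : Odd (Comp n I h a b γ u).card) :
    eps n I a γ (cmax n I h a b γ u) = eps n I a γ (cmin n I h a b γ u) := by
  obtain ⟨e1, _⟩ := alt_lemma (eps n I a γ) (Comp n I h a b γ u) (comp_ne u)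
    (comp_hR hp hgen hAu)
  have heven : Even ((Comp n I h a b γ u).card - 1) := by
    obtain ⟨m, hm⟩ := hodd
    exact ⟨m, by omega⟩
  show eps n I a γ ((Comp n I h a b γ u).max' _) = _
  rw [e1, Even.neg_one_pow heven, one_mul]
  rfl

lemma eps_sum_even (hp : IsProper n I h γ) (hgen : IsGenHess n I h) {u : Vx n I}
    (hAu : Act n I a b γ u) (heven : ¬ Odd (Comp n I h a b γ u).card) :
    ∑ w ∈ Comp n I h a b γ u, eps n I a γ w = 0 := by
  obtain ⟨_, e2⟩ := alt_lemma (eps n I a γ) (Comp n I h a b γ u) (comp_ne u)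
    (comp_hR hp hgen hAu)
  rw [e2, if_neg heven]

end Lemmas2

noncomputable section Lemmas3

open GenHess

variable {n : ℕ} {I : Finset ℕ} {h : ℕ → ℕ} {N : ℕ} {a b : Fin N}
variable {γ : Vx n I → Finset (Fin N)}

lemma cmin_mem (v : Vx n I) : cmin n I h a b γ v ∈ Comp n I h a b γ v := by
  unfold cmin; exact Finset.min'_mem _ _

lemma cmax_mem (v : Vx n I) : cmax n I h a b γ v ∈ Comp n I h a b γ v := by
  unfold cmax; exact Finset.max'_mem _ _

lemma phi_pos {v : Vx n I} (hFv : Flip n I h a b γ v) :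
    Phi n I h a b γ v = (γ v).image (Equiv.swap a b) := by
  unfold Phi; exact if_pos hFv

lemma phi_neg {v : Vx n I} (hFv : ¬ Flip n I h a b γ v) :
    Phi n I h a b γ v = γ v := by
  unfold Phi; exact if_neg hFv

lemma sum_ite_const {α : Type*} {c : Prop} [Decidable c] (f : α → ℤ) (s : Finset α) :
    ∑ x ∈ s, (if c then f x else 0) = if c then ∑ x ∈ s, f x else 0 := by
  split <;> simp

lemma asc_cast (δ : Vx n I → Finset (Fin N)) :
    ((asc n I h δ : ℤ)) = ∑ v : Vx n I, ∑ u : Vx n I,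
      (if Ed n I h v u then (cnt (δ v) (δ u) : ℤ) else 0) := by
  unfold GenHess.asc cnt Ed
  push_cast
  apply Finset.sum_congr rfl; intro v _
  apply Finset.sum_congr rfl; intro u _
  split_ifs <;> rfl

lemma asc_phi (hab : (a : ℕ) + 1 = b) (hp : IsProper n I h γ) (hgen : IsGenHess n I h) :
    asc n I h (Phi n I h a b γ) = asc n I h γ := by
  have key : ∀ v u : Vx n I,
      (if Ed n I h v u then (cnt (Phi n I h a b γ v) (Phi n I h a b γ u) : ℤ) else 0)
        = (if Ed n I h v u then (cnt (γ v) (γ u) : ℤ) else 0)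
          + (if Ed n I h v u ∧ Flip n I h a b γ v ∧ Flip n I h a b γ u
              then eps n I a γ u else 0) := by
    intro v u
    by_cases e : Ed n I h v u
    · rw [if_pos e, if_pos e]
      have hd := hp.2 v u e.1 e.2
      by_cases hFv : Flip n I h a b γ v <;> by_cases hFu : Flip n I h a b γ u
      · rw [if_pos ⟨e, hFv, hFu⟩, phi_pos hFv, phi_pos hFu, cnt_swap hab _ _ hd]
        rcases act_opp hp e hFv.1 hFu.1 with ⟨ha, hb', hna, hnb⟩ | ⟨hb, ha', hnb', hna'⟩
        · rw [if_neg (fun hh => hnb hh.1), if_pos ⟨ha, hb'⟩,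
            show eps n I a γ u = -1 from by simp [eps, hna]]
          ring
        · rw [if_pos ⟨hb, ha'⟩, if_neg (fun hh => hna' hh.1),
            show eps n I a γ u = 1 from by simp [eps, ha']]
          ring
      · rw [if_neg (fun hh => hFu hh.2.2)]
        have hAu := not_act_of_edge_flip hFv hFu (Or.inl e)
        obtain ⟨hna, hnb⟩ := inact_aux hd (act_mem hFv.1) hAu
        rw [phi_pos hFv, phi_neg hFu]
        have hcc : (cnt ((γ v).image (Equiv.swap a b)) ((γ u).image (Equiv.swap a b)) : ℤ)
            = cnt (γ v) (γ u) := by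
          rw [cnt_swap hab _ _ hd, if_neg (fun hh => hna hh.2),
            if_neg (fun hh => hnb hh.2)]
          ring
        rw [image_swap_of_notmem hna hnb] at hcc
        rw [hcc, add_zero]
      · rw [if_neg (fun hh => hFv hh.2.1)]
        have hAv := not_act_of_edge_flip hFu hFv (Or.inr e)
        obtain ⟨hna, hnb⟩ := inact_aux hd.symm (act_mem hFu.1) hAv
        rw [phi_neg hFv, phi_pos hFu]
        have hcc : (cnt ((γ v).image (Equiv.swap a b)) ((γ u).image (Equiv.swap a b)) : ℤ)
            = cnt (γ v) (γ u) := by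
          rw [cnt_swap hab _ _ hd, if_neg (fun hh => hnb hh.1),
            if_neg (fun hh => hna hh.1)]
          ring
        rw [image_swap_of_notmem hna hnb] at hcc
        rw [hcc, add_zero]
      · rw [phi_neg hFv, phi_neg hFu, if_neg (fun hh => hFv hh.2.1), add_zero]
    · rw [if_neg e, if_neg e, if_neg (fun hh => e hh.1), add_zero]
  -- the correction term
  set FS := Finset.univ.filter (Flip n I h a b γ) with hFS
  have memFS : ∀ {v : Vx n I}, v ∈ FS ↔ Flip n I h a b γ v := by
    intro v; rw [hFS, Finset.mem_filter]; simp
  set Δ := ∑ v : Vx n I, ∑ u : Vx n I,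
      (if Ed n I h v u ∧ Flip n I h a b γ v ∧ Flip n I h a b γ u
        then eps n I a γ u else 0) with hΔdef
  have hΔ1 : Δ = ∑ v ∈ FS, ∑ u ∈ FS, (if Ed n I h v u then eps n I a γ u else 0) := by
    rw [hΔdef]
    have step1 : ∀ v u : Vx n I,
        (if Ed n I h v u ∧ Flip n I h a b γ v ∧ Flip n I h a b γ u
          then eps n I a γ u else 0)
        = if Flip n I h a b γ v then
            (if Flip n I h a b γ u then (if Ed n I h v u then eps n I a γ u else 0)
              else 0) else 0 := by
      intro v u
      by_cases h1 : Flip n I h a b γ v <;> by_cases h2 : Flip n I h a b γ u <;>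
        by_cases h3 : Ed n I h v u <;> simp [h1, h2, h3]
    calc ∑ v : Vx n I, ∑ u : Vx n I, _ = ∑ v : Vx n I,
        (if Flip n I h a b γ v then (∑ u : Vx n I, (if Flip n I h a b γ u then
          (if Ed n I h v u then eps n I a γ u else 0) else 0)) else 0) := by
          apply Finset.sum_congr rfl
          intro v _
          rw [← sum_ite_const]
          exact Finset.sum_congr rfl (fun u _ => step1 v u)
      _ = ∑ v ∈ FS, ∑ u : Vx n I, (if Flip n I h a b γ u then
          (if Ed n I h v u then eps n I a γ u else 0) else 0) := by
          rw [hFS, ← Finset.sum_filter]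
      _ = ∑ v ∈ FS, ∑ u ∈ FS, (if Ed n I h v u then eps n I a γ u else 0) := by
          apply Finset.sum_congr rfl
          intro v _
          rw [hFS, ← Finset.sum_filter]
  have hA : ∀ u ∈ FS, ∀ c : ℤ, (∑ v ∈ FS, (if Ed n I h v u then c else 0))
      = ((FS.filter (fun v => Ed n I h v u)).card : ℤ) * c := by
    intro u _ c
    rw [← Finset.sum_filter, Finset.sum_const, nsmul_eq_mul]
  have hΔin : Δ = (∑ u ∈ FS, eps n I a γ u)
      - ∑ u ∈ FS, (if u = cmin n I h a b γ u then eps n I a γ u else 0) := by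
    rw [hΔ1, Finset.sum_comm, ← Finset.sum_sub_distrib]
    apply Finset.sum_congr rfl
    intro u hu
    rw [hA u hu]
    rw [indeg_card hp hgen (memFS.mp hu)]
    by_cases hc : u = cmin n I h a b γ u
    · rw [if_pos hc, if_pos hc]; push_cast; ring
    · rw [if_neg hc, if_neg hc]; push_cast; ring
  have hB : ∀ v ∈ FS, ∀ c : ℤ, (∑ u ∈ FS, (if Ed n I h v u then c else 0))
      = ((FS.filter (fun u => Ed n I h v u)).card : ℤ) * c := by
    intro v _ c
    rw [← Finset.sum_filter, Finset.sum_const, nsmul_eq_mul]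
  have hΔout : Δ = (∑ u ∈ FS, (if u = cmax n I h a b γ u then eps n I a γ u else 0))
      - ∑ u ∈ FS, eps n I a γ u := by
    rw [hΔ1]
    have hrw : ∀ v ∈ FS, (∑ u ∈ FS, (if Ed n I h v u then eps n I a γ u else 0))
        = ∑ u ∈ FS, (if Ed n I h v u then -eps n I a γ v else 0) := by
      intro v hv
      apply Finset.sum_congr rfl
      intro u hu
      by_cases e : Ed n I h v u
      · rw [if_pos e, if_pos e, eps_flip hp e (memFS.mp hv).1 (memFS.mp hu).1]
      · rw [if_neg e, if_neg e]
    rw [Finset.sum_congr rfl hrw, ← Finset.sum_sub_distrib]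
    apply Finset.sum_congr rfl
    intro v hv
    rw [hB v hv, outdeg_card hp hgen (memFS.mp hv)]
    by_cases hc : v = cmax n I h a b γ v
    · rw [if_pos hc, if_pos hc]; push_cast; ring
    · rw [if_neg hc, if_neg hc]; push_cast; ring
  have hMxMn : (∑ u ∈ FS, (if u = cmax n I h a b γ u then eps n I a γ u else 0))
      = ∑ u ∈ FS, (if u = cmin n I h a b γ u then eps n I a γ u else 0) := by
    rw [← Finset.sum_filter, ← Finset.sum_filter]
    apply Finset.sum_nbij' (i := fun u => cmin n I h a b γ u)
      (j := fun u => cmax n I h a b γ u)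
    · intro u hu
      rw [Finset.mem_filter] at hu
      obtain ⟨huF, hcu⟩ := hu
      have hFu := memFS.mp huF
      have hconn : Conn n I h a b γ u (cmin n I h a b γ u) := mem_comp.mp (cmin_mem u)
      have hcomp : Comp n I h a b γ (cmin n I h a b γ u) = Comp n I h a b γ u :=
        (comp_eq_of_conn hconn).symm
      refine Finset.mem_filter.mpr ⟨memFS.mpr ⟨act_of_conn hFu.1 hconn, ?_⟩, ?_⟩
      · rw [hcomp]; exact hFu.2
      · exact (cmin_eq_of_comp hcomp).symm
    · intro u hu
      rw [Finset.mem_filter] at hu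
      obtain ⟨huF, hcu⟩ := hu
      have hFu := memFS.mp huF
      have hconn : Conn n I h a b γ u (cmax n I h a b γ u) := mem_comp.mp (cmax_mem u)
      have hcomp : Comp n I h a b γ (cmax n I h a b γ u) = Comp n I h a b γ u :=
        (comp_eq_of_conn hconn).symm
      refine Finset.mem_filter.mpr ⟨memFS.mpr ⟨act_of_conn hFu.1 hconn, ?_⟩, ?_⟩
      · rw [hcomp]; exact hFu.2
      · exact (cmax_eq_of_comp hcomp).symm
    · intro u hu
      rw [Finset.mem_filter] at hu
      have hconn : Conn n I h a b γ u (cmin n I h a b γ u) := mem_comp.mp (cmin_mem u)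
      have hcomp : Comp n I h a b γ (cmin n I h a b γ u) = Comp n I h a b γ u :=
        (comp_eq_of_conn hconn).symm
      rw [cmax_eq_of_comp hcomp, ← hu.2]
    · intro u hu
      rw [Finset.mem_filter] at hu
      have hconn : Conn n I h a b γ u (cmax n I h a b γ u) := mem_comp.mp (cmax_mem u)
      have hcomp : Comp n I h a b γ (cmax n I h a b γ u) = Comp n I h a b γ u :=
        (comp_eq_of_conn hconn).symm
      rw [cmin_eq_of_comp hcomp, ← hu.2]
    · intro u hu
      rw [Finset.mem_filter] at hu
      obtain ⟨huF, hcu⟩ := hu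
      have hFu := memFS.mp huF
      have hmm := eps_minmax hp hgen hFu.1 hFu.2
      rw [← hcu] at hmm
      exact hmm
  have hΔ0 : Δ = 0 := by linarith [hΔin, hΔout, hMxMn]
  have e1 := asc_cast (h := h) (Phi n I h a b γ)
  have e2 := asc_cast (h := h) γ
  have efinal : (asc n I h (Phi n I h a b γ) : ℤ) = (asc n I h γ : ℤ) := by
    rw [e1, e2]
    have hsplit : (∑ v : Vx n I, ∑ u : Vx n I,
        (if Ed n I h v u then (cnt (Phi n I h a b γ v) (Phi n I h a b γ u) : ℤ) else 0))
        = (∑ v : Vx n I, ∑ u : Vx n I,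
            (if Ed n I h v u then (cnt (γ v) (γ u) : ℤ) else 0)) + Δ := by
      rw [hΔdef, ← Finset.sum_add_distrib]
      apply Finset.sum_congr rfl
      intro v _
      rw [← Finset.sum_add_distrib]
      exact Finset.sum_congr rfl (fun u _ => key v u)
    rw [hsplit, hΔ0, add_zero]
  exact_mod_cast efinal

end Lemmas3
noncomputable section Lemmas4

open GenHess MvPolynomial

variable {n : ℕ} {I : Finset ℕ} {h : ℕ → ℕ} {N : ℕ} {a b : Fin N}
variable {γ : Vx n I → Finset (Fin N)}

lemma image_swap_of_mem_mem {a b : Fin N} {t : Finset (Fin N)} (ha : a ∈ t) (hb : b ∈ t) :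
    t.image (Equiv.swap a b) = t := by
  ext y
  rw [mem_image_swap]
  rcases eq_or_ne y a with rfl | hya
  · rw [Equiv.swap_apply_left]; exact ⟨fun _ => ha, fun _ => hb⟩
  rcases eq_or_ne y b with rfl | hyb
  · rw [Equiv.swap_apply_right]; exact ⟨fun _ => hb, fun _ => ha⟩
  · rw [Equiv.swap_apply_of_ne_of_ne hya hyb]

lemma not_act_iff {v : Vx n I} (hAv : ¬ Act n I a b γ v) : (a ∈ γ v ↔ b ∈ γ v) := by
  unfold Act at hAv
  push_neg at hAv
  exact ⟨hAv.1, hAv.2⟩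

lemma comp_prod_even (hp : IsProper n I h γ) (hgen : IsGenHess n I h) {r : Vx n I}
    (hAr : Act n I a b γ r) (hev : ¬ Odd (Comp n I h a b γ r).card) :
    (∏ u ∈ Comp n I h a b γ r, ∏ x ∈ γ u, (X (Equiv.swap a b x) : MvPolynomial (Fin N) ℤ))
      = ∏ u ∈ Comp n I h a b γ r, ∏ x ∈ γ u, X x := by
  have hact : ∀ u ∈ Comp n I h a b γ r, Act n I a b γ u :=
    fun u hu => act_of_conn hAr (mem_comp.mp hu)
  set spc : Vx n I → Fin N := fun u => if a ∈ γ u then a else b with hspc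
  have hsplit : ∀ u ∈ Comp n I h a b γ r,
      ((∏ x ∈ γ u, (X (Equiv.swap a b x) : MvPolynomial (Fin N) ℤ))
        = X (Equiv.swap a b (spc u)) * ∏ x ∈ (γ u).erase (spc u), X x)
      ∧ ((∏ x ∈ γ u, (X x : MvPolynomial (Fin N) ℤ))
        = X (spc u) * ∏ x ∈ (γ u).erase (spc u), X x) := by
    intro u hu
    have hAu := hact u hu
    have hm : spc u ∈ γ u := by
      rw [hspc]
      rcases hAu with ⟨ha, _⟩ | ⟨hb, ha⟩
      · simpa [ha] using ha
      · simp only [if_neg ha]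
        exact hb
    have herase : ∀ x ∈ (γ u).erase (spc u), Equiv.swap a b x = x := by
      intro x hx
      obtain ⟨hne, hxm⟩ := Finset.mem_erase.mp hx
      rcases hAu with ⟨ha, hb⟩ | ⟨hb, ha⟩
      · have hsa : spc u = a := by rw [hspc]; simp [ha]
        refine Equiv.swap_apply_of_ne_of_ne (by rw [← hsa]; exact hne) ?_
        intro e; exact hb (e ▸ hxm)
      · have hsb : spc u = b := by rw [hspc]; simp [ha]
        refine Equiv.swap_apply_of_ne_of_ne ?_ (by rw [← hsb]; exact hne)
        intro e; exact ha (e ▸ hxm)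
    constructor
    · rw [← Finset.mul_prod_erase (γ u) (fun x => (X (Equiv.swap a b x) :
        MvPolynomial (Fin N) ℤ)) hm]
      congr 1
      exact Finset.prod_congr rfl (fun x hx => by rw [herase x hx])
    · rw [← Finset.mul_prod_erase (γ u) (fun x => (X x : MvPolynomial (Fin N) ℤ)) hm]
  rw [Finset.prod_congr rfl (fun u hu => (hsplit u hu).1),
    Finset.prod_congr rfl (fun u hu => (hsplit u hu).2),
    Finset.prod_mul_distrib, Finset.prod_mul_distrib]
  congr 1
  -- counting: number of a-vertices equals number of b-vertices
  have hsum := eps_sum_even hp hgen hAr hev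
  set C := Comp n I h a b γ r with hC
  set ka := (C.filter (fun u => a ∈ γ u)).card with hka
  set kb := (C.filter (fun u => ¬ a ∈ γ u)).card with hkb
  have hsum2 : (ka : ℤ) - kb = 0 := by
    rw [← hsum, ← Finset.sum_filter_add_sum_filter_not C (fun u => a ∈ γ u)]
    have e1 : ∑ u ∈ C.filter (fun u => a ∈ γ u), eps n I a γ u = (ka : ℤ) := by
      rw [hka]
      rw [Finset.sum_congr rfl (fun u hu => show eps n I a γ u = 1 from
        by simp [eps, (Finset.mem_filter.mp hu).2])]
      rw [Finset.sum_const, nsmul_eq_mul, mul_one]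
    have e2 : ∑ u ∈ C.filter (fun u => ¬ a ∈ γ u), eps n I a γ u = -(kb : ℤ) := by
      rw [hkb]
      rw [Finset.sum_congr rfl (fun u hu => show eps n I a γ u = -1 from
        by simp [eps, (Finset.mem_filter.mp hu).2])]
      rw [Finset.sum_const, nsmul_eq_mul, mul_neg_one]
    rw [e1, e2]
    ring
  have hkakb : ka = kb := by exact_mod_cast sub_eq_zero.mp hsum2
  have lhs_eq : (∏ u ∈ C, (X (Equiv.swap a b (spc u)) : MvPolynomial (Fin N) ℤ))
      = X b ^ ka * X a ^ kb := by
    rw [← Finset.prod_filter_mul_prod_filter_not C (fun u => a ∈ γ u)]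
    congr 1
    · rw [Finset.prod_congr rfl (fun u hu => show
        (X (Equiv.swap a b (spc u)) : MvPolynomial (Fin N) ℤ) = X b from by
          rw [hspc]; simp [(Finset.mem_filter.mp hu).2, Equiv.swap_apply_left])]
      rw [Finset.prod_const, hka]
    · rw [Finset.prod_congr rfl (fun u hu => show
        (X (Equiv.swap a b (spc u)) : MvPolynomial (Fin N) ℤ) = X a from by
          rw [hspc]; simp [(Finset.mem_filter.mp hu).2, Equiv.swap_apply_right])]
      rw [Finset.prod_const, hkb]
  have rhs_eq : (∏ u ∈ C, (X (spc u) : MvPolynomial (Fin N) ℤ))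
      = X a ^ ka * X b ^ kb := by
    rw [← Finset.prod_filter_mul_prod_filter_not C (fun u => a ∈ γ u)]
    congr 1
    · rw [Finset.prod_congr rfl (fun u hu => show
        (X (spc u) : MvPolynomial (Fin N) ℤ) = X a from by
          rw [hspc]; simp [(Finset.mem_filter.mp hu).2])]
      rw [Finset.prod_const, hka]
    · rw [Finset.prod_congr rfl (fun u hu => show
        (X (spc u) : MvPolynomial (Fin N) ℤ) = X b from by
          rw [hspc]; simp [(Finset.mem_filter.mp hu).2])]
      rw [Finset.prod_const, hkb]
  rw [lhs_eq, rhs_eq, hkakb]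
  ring

lemma fiber_eq (hgen : IsGenHess n I h) {r : Vx n I}
    (hr : r ∈ (Finset.univ.filter
      (fun v => Act n I a b γ v ∧ ¬ Flip n I h a b γ v)).image (cmin n I h a b γ)) :
    (Finset.univ.filter (fun v => Act n I a b γ v ∧ ¬ Flip n I h a b γ v)).filter
        (fun v => cmin n I h a b γ v = r)
      = Comp n I h a b γ r := by
  obtain ⟨v0, hv0, hr0⟩ := Finset.mem_image.mp hr
  have hQv0 := (Finset.mem_filter.mp hv0).2
  have hconn0 : Conn n I h a b γ v0 r := by
    rw [← hr0]; exact mem_comp.mp (cmin_mem v0)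
  have hAr : Act n I a b γ r := act_of_conn hQv0.1 hconn0
  have hcompr : Comp n I h a b γ r = Comp n I h a b γ v0 := (comp_eq_of_conn hconn0).symm
  have hcminr : cmin n I h a b γ r = r := by
    rw [cmin_eq_of_comp hcompr, hr0]
  ext u
  constructor
  · intro hu
    rw [Finset.mem_filter] at hu
    have hcu := hu.2
    have hrC : r ∈ Comp n I h a b γ u := by rw [← hcu]; exact cmin_mem u
    exact mem_comp.mpr (conn_symm (mem_comp.mp hrC))
  · intro hu
    have hconn : Conn n I h a b γ r u := mem_comp.mp hu
    have hAu : Act n I a b γ u := act_of_conn hAr hconn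
    have hcomp_u : Comp n I h a b γ u = Comp n I h a b γ r := (comp_eq_of_conn hconn).symm
    have hnF : ¬ Flip n I h a b γ u := by
      intro hF
      apply hQv0.2
      refine ⟨hQv0.1, ?_⟩
      have := hF.2
      rw [hcomp_u, hcompr] at this
      exact this
    refine Finset.mem_filter.mpr ⟨Finset.mem_filter.mpr ⟨Finset.mem_univ _, hAu, hnF⟩, ?_⟩
    rw [cmin_eq_of_comp hcomp_u, hcminr]

lemma prod_phi (hp : IsProper n I h γ) (hgen : IsGenHess n I h) :
    (MvPolynomial.rename (⇑(Equiv.swap a b)))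
        (∏ v : Vx n I, ∏ x ∈ γ v, (X x : MvPolynomial (Fin N) ℤ))
      = ∏ v : Vx n I, ∏ x ∈ Phi n I h a b γ v, X x := by
  have L : (MvPolynomial.rename (⇑(Equiv.swap a b)))
      (∏ v : Vx n I, ∏ x ∈ γ v, (X x : MvPolynomial (Fin N) ℤ))
      = ∏ v : Vx n I, ∏ x ∈ γ v, X (Equiv.swap a b x) := by
    rw [map_prod]
    refine Finset.prod_congr rfl (fun v _ => ?_)
    rw [map_prod]
    exact Finset.prod_congr rfl (fun x _ => by rw [rename_X])
  rw [L]
  rw [← Finset.prod_filter_mul_prod_filter_not Finset.univ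
    (fun v => Act n I a b γ v ∧ ¬ Flip n I h a b γ v)
    (fun v => ∏ x ∈ γ v, (X (Equiv.swap a b x) : MvPolynomial (Fin N) ℤ)),
    ← Finset.prod_filter_mul_prod_filter_not Finset.univ
    (fun v => Act n I a b γ v ∧ ¬ Flip n I h a b γ v)
    (fun v => ∏ x ∈ Phi n I h a b γ v, (X x : MvPolynomial (Fin N) ℤ))]
  congr 1
  · -- the active-even part, grouped by components
    rw [← Finset.prod_fiberwise_of_maps_to (g := cmin n I h a b γ)
      (t := (Finset.univ.filter (fun v => Act n I a b γ v ∧ ¬ Flip n I h a b γ v)).image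
        (cmin n I h a b γ)) (fun x hx => Finset.mem_image_of_mem _ hx),
      ← Finset.prod_fiberwise_of_maps_to (g := cmin n I h a b γ)
      (t := (Finset.univ.filter (fun v => Act n I a b γ v ∧ ¬ Flip n I h a b γ v)).image
        (cmin n I h a b γ)) (fun x hx => Finset.mem_image_of_mem _ hx)]
    refine Finset.prod_congr rfl (fun r hr => ?_)
    rw [fiber_eq hgen hr]
    -- identify facts about r
    obtain ⟨v0, hv0, hr0⟩ := Finset.mem_image.mp hr
    have hQv0 := (Finset.mem_filter.mp hv0).2
    have hconn0 : Conn n I h a b γ v0 r := by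
      rw [← hr0]; exact mem_comp.mp (cmin_mem v0)
    have hAr : Act n I a b γ r := act_of_conn hQv0.1 hconn0
    have hcompr : Comp n I h a b γ r = Comp n I h a b γ v0 := (comp_eq_of_conn hconn0).symm
    have hev : ¬ Odd (Comp n I h a b γ r).card := by
      intro hodd
      apply hQv0.2
      refine ⟨hQv0.1, ?_⟩
      rw [← hcompr]
      exact hodd
    have hgPhi : ∀ u ∈ Comp n I h a b γ r,
        (∏ x ∈ Phi n I h a b γ u, (X x : MvPolynomial (Fin N) ℤ)) = ∏ x ∈ γ u, X x := by
      intro u hu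
      have hconn : Conn n I h a b γ r u := mem_comp.mp hu
      have hnF : ¬ Flip n I h a b γ u := by
        intro hF
        apply hev
        rw [comp_eq_of_conn hconn]
        exact hF.2
      rw [phi_neg hnF]
    rw [Finset.prod_congr rfl hgPhi]
    exact comp_prod_even hp hgen hAr hev
  · -- the remaining part: pointwise equal
    refine Finset.prod_congr rfl (fun v hv => ?_)
    have hv' := (Finset.mem_filter.mp hv).2
    by_cases hFv : Flip n I h a b γ v
    · rw [phi_pos hFv, Finset.prod_image (fun x _ y _ e => Equiv.injective _ e)]
    · have hAv : ¬ Act n I a b γ v := by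
        intro hA
        exact hv' ⟨hA, hFv⟩
      have hiff := not_act_iff hAv
      have him : (γ v).image (Equiv.swap a b) = γ v := by
        by_cases ha : a ∈ γ v
        · exact image_swap_of_mem_mem ha (hiff.mp ha)
        · exact image_swap_of_notmem ha (fun hb => ha (hiff.mpr hb))
      calc ∏ x ∈ γ v, (X (Equiv.swap a b x) : MvPolynomial (Fin N) ℤ)
          = ∏ x ∈ (γ v).image (Equiv.swap a b), X x :=
            (Finset.prod_image (fun x _ y _ e => Equiv.injective _ e)).symm
        _ = ∏ x ∈ γ v, X x := by rw [him]
        _ = ∏ x ∈ Phi n I h a b γ v, X x := by rw [phi_neg hFv]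

end Lemmas4

noncomputable section Final

open GenHess MvPolynomial

theorem key_swap (n : ℕ) (I : Finset ℕ) (h : ℕ → ℕ) {N : ℕ} (hgen : IsGenHess n I h)
    (a b : Fin N) (hab : (a : ℕ) + 1 = (b : ℕ)) :
    Polynomial.map (MvPolynomial.rename (⇑(Equiv.swap a b)) :
        MvPolynomial (Fin N) ℤ →ₐ[ℤ] MvPolynomial (Fin N) ℤ).toRingHom (csf n I h N)
      = csf n I h N := by
  unfold GenHess.csf
  rw [← Polynomial.coe_mapRingHom, map_sum]
  have hterm : ∀ γ : Vx n I → Finset (Fin N),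
      (Polynomial.mapRingHom ((MvPolynomial.rename (⇑(Equiv.swap a b)) :
          MvPolynomial (Fin N) ℤ →ₐ[ℤ] MvPolynomial (Fin N) ℤ)).toRingHom)
        (Polynomial.C (∏ v : Vx n I, ∏ x ∈ γ v, MvPolynomial.X x)
          * Polynomial.X ^ asc n I h γ)
      = Polynomial.C ((MvPolynomial.rename (⇑(Equiv.swap a b)))
          (∏ v : Vx n I, ∏ x ∈ γ v, MvPolynomial.X x)) * Polynomial.X ^ asc n I h γ := by
    intro γ
    rw [map_mul, map_pow]
    simp [Polynomial.coe_mapRingHom, Polynomial.map_C, Polynomial.map_X]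
  rw [Finset.sum_congr rfl (fun γ _ => hterm γ)]
  apply Finset.sum_nbij' (i := fun γ => Phi n I h a b γ) (j := fun γ => Phi n I h a b γ)
  · intro γ hγ
    rw [Finset.mem_filter] at hγ ⊢
    exact ⟨Finset.mem_univ _, phi_proper hγ.2⟩
  · intro γ hγ
    rw [Finset.mem_filter] at hγ ⊢
    exact ⟨Finset.mem_univ _, phi_proper hγ.2⟩
  · intro γ _; exact phi_invol
  · intro γ _; exact phi_invol
  · intro γ hγ
    rw [Finset.mem_filter] at hγ
    rw [prod_phi hγ.2 hgen, asc_phi hab hγ.2 hgen]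

end Final

end CsfSym

open GenHess

/-- Symmetry of the generalized chromatic quasisymmetric function: permuting the
variables `x_1, …, x_N` leaves `csf_q^N(h)` unchanged. -/
theorem csf_symmetric (n : ℕ) (I : Finset ℕ) (h : ℕ → ℕ) (hgen : IsGenHess n I h)
    (N : ℕ) (hN : 1 ≤ N) (σ : Equiv.Perm (Fin N)) :
    Polynomial.map (MvPolynomial.rename (fun a => σ a) :
        MvPolynomial (Fin N) ℤ →ₐ[ℤ] MvPolynomial (Fin N) ℤ).toRingHom
      (csf n I h N) = csf n I h N := by
  obtain ⟨m, rfl⟩ : ∃ m, N = m + 1 := ⟨N - 1, by omega⟩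
  let S : Submonoid (Equiv.Perm (Fin (m + 1))) :=
    { carrier := {τ : Equiv.Perm (Fin (m + 1)) |
        Polynomial.map (MvPolynomial.rename (⇑τ) :
          MvPolynomial (Fin (m + 1)) ℤ →ₐ[ℤ] MvPolynomial (Fin (m + 1)) ℤ).toRingHom
          (csf n I h (m + 1)) = csf n I h (m + 1)}
      one_mem' := by
        have hid : ((MvPolynomial.rename (⇑(1 : Equiv.Perm (Fin (m + 1)))) :
            MvPolynomial (Fin (m + 1)) ℤ →ₐ[ℤ] MvPolynomial (Fin (m + 1)) ℤ)).toRingHom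
            = RingHom.id (MvPolynomial (Fin (m + 1)) ℤ) := by
          apply RingHom.ext
          intro p
          show MvPolynomial.rename (⇑(1 : Equiv.Perm (Fin (m + 1)))) p = p
          have : (⇑(1 : Equiv.Perm (Fin (m + 1)))) = id := rfl
          rw [this, MvPolynomial.rename_id]
          rfl
        show Polynomial.map _ _ = _
        rw [hid, Polynomial.map_id]
      mul_mem' := by
        intro τ₁ τ₂ h1 h2
        show Polynomial.map _ _ = _
        have hco : ((MvPolynomial.rename (⇑(τ₁ * τ₂)) :
            MvPolynomial (Fin (m + 1)) ℤ →ₐ[ℤ] MvPolynomial (Fin (m + 1)) ℤ)).toRingHom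
            = ((MvPolynomial.rename (⇑τ₁) :
              MvPolynomial (Fin (m + 1)) ℤ →ₐ[ℤ] MvPolynomial (Fin (m + 1)) ℤ)).toRingHom.comp
              ((MvPolynomial.rename (⇑τ₂) :
              MvPolynomial (Fin (m + 1)) ℤ →ₐ[ℤ] MvPolynomial (Fin (m + 1)) ℤ)).toRingHom := by
          apply RingHom.ext
          intro p
          show MvPolynomial.rename (⇑(τ₁ * τ₂)) p
            = MvPolynomial.rename (⇑τ₁) (MvPolynomial.rename (⇑τ₂) p)
          rw [MvPolynomial.rename_rename]
          rfl
        rw [hco, ← Polynomial.map_map]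
        rw [h2, h1] }
  have hgens : ∀ i : Fin m, Equiv.swap i.castSucc i.succ ∈ S := by
    intro i
    exact CsfSym.key_swap n I h hgen i.castSucc i.succ (by simp)
  have hσ : σ ∈ S := by
    have htop := Equiv.Perm.mclosure_swap_castSucc_succ m
    have hle : Submonoid.closure
        (Set.range fun i : Fin m => Equiv.swap i.castSucc i.succ) ≤ S := by
      apply Submonoid.closure_le.mpr
      rintro τ ⟨i, rfl⟩
      exact hgens i
    have : σ ∈ Submonoid.closure
        (Set.range fun i : Fin m => Equiv.swap i.castSucc i.succ) := by
      rw [htop]; trivial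
    exact hle this
  exact hσ
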